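/- Let A be a 2n×2n zero-one matrix, and let A^↕ be A flipped upside down (A^↕_{i,j} = A_{2n−i+1,j}). Then RB^{A^↕}(q,t) = q^{C(2n,2)} · t^n · RB^{A}(q^{−1}, t^{−1}), where C(2n,2) = 2n(2n−1)/2, as an identity of Laurent polynomials in q and t. -/

import Mathlib

open Finset

/-- A board: the set of one-entries (cells) of a zero-one matrix, as (row, column) pairs. -/
abbrev Board := Finset (ℕ × ℕ)

/-- The full `m × n` grid of cells. -/
def grid (m n : ℕ) : Board := Finset.range m ×ˢ Finset.range n

/-- The (non-taking) rook configurations on the board `A` with `k` rooks. -/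
def rookConfigs (A : Board) (k : ℕ) : Finset Board :=
  A.powerset.filter fun C =>
    C.card = k ∧ ∀ c ∈ C, ∀ c' ∈ C, c ≠ c' → c.1 ≠ c'.1 ∧ c.2 ≠ c'.2

/-- `invStat m n C`: the number of (not necessarily positive) cells of an `m × n` matrix
having no rook of the configuration `C` weakly to the right in the same row nor weakly
below in the same column. -/
def invStat (m n : ℕ) (C : Board) : ℕ :=
  ((grid m n).filter fun a =>
    (∀ c ∈ C, c.1 = a.1 → c.2 < a.2) ∧ (∀ c ∈ C, c.2 = a.2 → c.1 < a.1)).card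

/-- The `k`-th `q`-rook number of a board `A` of ambient matrix size `m × n`. -/
def qRook {F : Type*} [CommSemiring F] (q : F) (m n : ℕ) (A : Board) (k : ℕ) : F :=
  ∑ C ∈ rookConfigs A k, q ^ invStat m n C

/-- The `q`-analogue `[x]_q = 1 + q + ⋯ + q^(x-1)`. -/
def qInt {F : Type*} [CommSemiring F] (q : F) (x : ℕ) : F := ∑ i ∈ Finset.range x, q ^ i

/-- The `q`-factorial `[n]!_q = [1]_q [2]_q ⋯ [n]_q`. -/
def qFact {F : Type*} [CommSemiring F] (q : F) (n : ℕ) : F := ∏ i ∈ Finset.range n, qInt q (i + 1)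

/-- The `q`-Stirling numbers `S_{n,k}(q)` of Garsia and Remmel. -/
def qStirling {F : Type*} [CommSemiring F] (q : F) : ℕ → ℕ → F
  | 0, 0 => 1
  | 0, _ + 1 => 0
  | n + 1, k => (if k = 0 then 0 else q ^ (k - 1) * qStirling q n (k - 1)) + qInt q k * qStirling q n k

/-- Stirling numbers of the second kind. -/
def stirling2 : ℕ → ℕ → ℕ
  | 0, 0 => 1
  | 0, _ + 1 => 0
  | n + 1, k => (if k = 0 then 0 else stirling2 n (k - 1)) + k * stirling2 n k

/-- The board `A` covers the rook configuration of the permutation `π`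
(a rook at `(i, π i)` for every row `i`, zero-indexed). -/
def Covers {n : ℕ} (A : Board) (π : Equiv.Perm (Fin n)) : Prop :=
  ∀ i : Fin n, ((i : ℕ), (π i : ℕ)) ∈ A

/-- `bruhatRank π i j` is the number of rooks of `π` weakly north-east of cell `(i,j)`,
i.e. `|{a ≤ i : π a ≥ j}|`. -/
def bruhatRank {n : ℕ} (π : Equiv.Perm (Fin n)) (i j : Fin n) : ℕ :=
  (Finset.univ.filter fun a : Fin n => a ≤ i ∧ j ≤ π a).card

/-- Bruhat order on the symmetric group, via the standard (Ehresmann) rank criterion. -/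
def BruhatLE {n : ℕ} (u w : Equiv.Perm (Fin n)) : Prop :=
  ∀ i j : Fin n, bruhatRank u i j ≤ bruhatRank w i j


instance {n : ℕ} (A : Board) (π : Equiv.Perm (Fin n)) : Decidable (Covers A π) :=
  inferInstanceAs (Decidable (∀ i : Fin n, ((i : ℕ), (π i : ℕ)) ∈ A))

instance {n : ℕ} (u w : Equiv.Perm (Fin n)) : Decidable (BruhatLE u w) :=
  inferInstanceAs (Decidable (∀ i j : Fin n, bruhatRank u i j ≤ bruhatRank w i j))

/-- The number of inversions of a permutation (= its Coxeter length). -/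
def inversions {n : ℕ} (π : Equiv.Perm (Fin n)) : ℕ :=
  (Finset.univ.filter fun p : Fin n × Fin n => p.1 < p.2 ∧ π p.2 < π p.1).card

/-- A right-aligned Ferrers matrix inside the `n × n` grid: every one-entry has one-entries
(weakly) to its right in the grid and above it. -/
def IsRightFerrers (n : ℕ) (A : Board) : Prop :=
  A ⊆ grid n n ∧ ∀ i j i' j' : ℕ, (i, j) ∈ A → i' ≤ i → j ≤ j' → j' < n → (i', j') ∈ A

/-- A left-aligned Ferrers matrix inside the `n × n` grid. -/
def IsLeftFerrers (n : ℕ) (A : Board) : Prop :=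
  A ⊆ grid n n ∧ ∀ i j i' j' : ℕ, (i, j) ∈ A → i' ≤ i → j' ≤ j → (i', j') ∈ A

/-- A right-aligned skew Ferrers matrix: an entrywise difference `λ - μ` of right-aligned
Ferrers matrices with `μ ≤ λ`. -/
def IsRightSkewFerrers (n : ℕ) (B : Board) : Prop :=
  ∃ L M : Board, IsRightFerrers n L ∧ IsRightFerrers n M ∧ M ⊆ L ∧ B = L \ M

/-- A left-aligned skew Ferrers matrix. -/
def IsLeftSkewFerrers (n : ℕ) (B : Board) : Prop :=
  ∃ L M : Board, IsLeftFerrers n L ∧ IsLeftFerrers n M ∧ M ⊆ L ∧ B = L \ M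

/-- `H` is the right hull of `π`: the smallest right-aligned skew Ferrers matrix covering `π`. -/
def IsRightHull {n : ℕ} (π : Equiv.Perm (Fin n)) (H : Board) : Prop :=
  IsRightSkewFerrers n H ∧ Covers H π ∧
    ∀ B : Board, IsRightSkewFerrers n B → Covers B π → H ⊆ B

/-- `H` is the left hull of `π`: the smallest left-aligned skew Ferrers matrix covering `π`. -/
def IsLeftHull {n : ℕ} (π : Equiv.Perm (Fin n)) (H : Board) : Prop :=
  IsLeftSkewFerrers n H ∧ Covers H π ∧
    ∀ B : Board, IsLeftSkewFerrers n B → Covers B π → H ⊆ B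

/-- `π` contains the pattern `σ`. -/
def ContainsPattern {n m : ℕ} (π : Equiv.Perm (Fin n)) (σ : Equiv.Perm (Fin m)) : Prop :=
  ∃ f : Fin m → Fin n, StrictMono f ∧ ∀ a b : Fin m, σ a < σ b ↔ π (f a) < π (f b)

/-- The pattern 4231 (one-line notation, here zero-indexed). -/
def p4231 : Equiv.Perm (Fin 4) := ⟨![3,1,2,0], ![3,1,2,0], by decide, by decide⟩
/-- The pattern 35142. -/
def p35142 : Equiv.Perm (Fin 5) := ⟨![2,4,0,3,1], ![2,4,0,3,1], by decide, by decide⟩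
/-- The pattern 42513. -/
def p42513 : Equiv.Perm (Fin 5) := ⟨![3,1,4,0,2], ![3,1,4,0,2], by decide, by decide⟩
/-- The pattern 351624. -/
def p351624 : Equiv.Perm (Fin 6) := ⟨![2,4,0,5,1,3], ![2,4,0,5,1,3], by decide, by decide⟩

/-- `π` avoids the four patterns 4231, 35142, 42513 and 351624. -/
def AvoidsThePatterns {n : ℕ} (π : Equiv.Perm (Fin n)) : Prop :=
  ¬ ContainsPattern π p4231 ∧ ¬ ContainsPattern π p35142 ∧
    ¬ ContainsPattern π p42513 ∧ ¬ ContainsPattern π p351624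

/-- Rotating an `m × n` board by 180 degrees. -/
def rot180 (m n : ℕ) (A : Board) : Board := A.image fun c => (m - 1 - c.1, n - 1 - c.2)

/-- Flipping an `m`-row board upside down. -/
def flipud (m : ℕ) (A : Board) : Board := A.image fun c => (m - 1 - c.1, c.2)

/-- The block matrix `B # A` with `B` (of size `nB × nB`) in the top-left corner, `A`
(of size `mA × mA`) in the bottom-right corner, and all-ones off-diagonal blocks. -/
def blockSharp (nB mA : ℕ) (B A : Board) : Board :=
  B ∪ Finset.range nB ×ˢ Finset.Ico nB (nB + mA) ∪ Finset.Ico nB (nB + mA) ×ˢ Finset.range nB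
    ∪ A.image fun c => (c.1 + nB, c.2 + nB)

/-- The 180-degree rotation of a permutation of `Fin n`: `π^↻ (i) = n - 1 - π (n - 1 - i)`. -/
def rot180Perm {n : ℕ} (π : Equiv.Perm (Fin n)) : Equiv.Perm (Fin n) :=
  (Fin.revPerm.trans π).trans Fin.revPerm

/-- The statistic `neg(π) = |{i ∈ [n+1, 2n] : π i ≤ n}|` (one-indexed) on `S_{2n}`. -/
def negStat (n : ℕ) (π : Equiv.Perm (Fin (2 * n))) : ℕ :=
  (Finset.univ.filter fun i : Fin (2 * n) => n ≤ (i : ℕ) ∧ (π i : ℕ) < n).card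

/-- `RB^M (q, t) = Σ_{π ∈ 𝔖ₙᴮ ∩ 𝔖(M)} q^{inv π} t^{neg π}` over rotationally symmetric
permutations of `S_{2n}` covered by the `2n × 2n` board `M`. -/
def RB {F : Type*} [CommSemiring F] (q t : F) (n : ℕ) (M : Board) : F :=
  ∑ π ∈ Finset.univ.filter fun π : Equiv.Perm (Fin (2 * n)) => rot180Perm π = π ∧ Covers M π,
    q ^ inversions π * t ^ negStat n π

/-- The triangular board `T_m` with ones on and above the secondary diagonal. -/
def Tboard (m : ℕ) : Board := (grid m m).filter fun c => c.1 + c.2 < m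

/-- The field `ℚ(q,t)` of rational functions in two variables. -/
noncomputable abbrev QTfield := FractionRing (MvPolynomial (Fin 2) ℚ)
/-- The variable `q` in `ℚ(q,t)`. -/
noncomputable def qvar : QTfield := algebraMap (MvPolynomial (Fin 2) ℚ) _ (MvPolynomial.X 0)
/-- The variable `t` in `ℚ(q,t)`. -/
noncomputable def tvar : QTfield := algebraMap (MvPolynomial (Fin 2) ℚ) _ (MvPolynomial.X 1)


section Aux

open Finset

lemma card_lt_pairs (m : ℕ) :
    ((Finset.univ : Finset (Fin m × Fin m)).filter fun p => p.1 < p.2).card = m.choose 2 := by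
  rw [Finset.card_eq_sum_card_fiberwise (f := Prod.snd) (t := Finset.univ)
    (fun x _ => Finset.mem_univ _)]
  have h1 : ∀ b : Fin m,
      ((((Finset.univ : Finset (Fin m × Fin m)).filter fun p => p.1 < p.2)).filter
        fun p => p.2 = b).card = (b : ℕ) := by
    intro b
    rw [← Fin.card_Iio (b := b)]
    refine Finset.card_bij' (fun p _ => p.1) (fun a _ => (a, b)) ?_ ?_ ?_ ?_
    · intro p hp
      simp only [Finset.mem_filter, Finset.mem_univ, true_and] at hp
      simp [Finset.mem_Iio, hp.2 ▸ hp.1]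
    · intro a ha
      simp only [Finset.mem_Iio] at ha
      simp [ha]
    · intro p hp
      simp only [Finset.mem_filter, Finset.mem_univ, true_and] at hp
      exact Prod.ext rfl hp.2.symm
    · intro a _
      rfl
  rw [Finset.sum_congr rfl fun b _ => h1 b]
  rw [Fin.sum_univ_eq_sum_range (fun i => i) m]
  rw [Nat.choose_two_right]
  have := Finset.sum_range_id_mul_two m
  omega

lemma revtrans_apply {m : ℕ} (π : Equiv.Perm (Fin m)) (i : Fin m) :
    (Fin.revPerm.trans π) i = π i.rev := rfl

lemma revtrans_revtrans {m : ℕ} (π : Equiv.Perm (Fin m)) :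
    Fin.revPerm.trans (Fin.revPerm.trans π) = π := by
  ext i
  simp [revtrans_apply, Fin.rev_rev]

lemma inversions_revtrans {m : ℕ} (π : Equiv.Perm (Fin m)) :
    inversions (Fin.revPerm.trans π) + inversions π = m.choose 2 := by
  have hA : inversions (Fin.revPerm.trans π) =
      ((Finset.univ : Finset (Fin m × Fin m)).filter fun p =>
        p.1 < p.2 ∧ π p.1 < π p.2).card := by
    unfold inversions
    refine Finset.card_bij' (fun p _ => (p.2.rev, p.1.rev)) (fun p _ => (p.2.rev, p.1.rev)) ?_ ?_ ?_ ?_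
    · intro p hp
      have hp' := (Finset.mem_filter.mp hp).2
      refine Finset.mem_filter.mpr ⟨Finset.mem_univ _, ?_⟩
      exact ⟨Fin.rev_lt_rev.mpr hp'.1, hp'.2⟩
    · intro p hp
      have hp' := (Finset.mem_filter.mp hp).2
      refine Finset.mem_filter.mpr ⟨Finset.mem_univ _, ?_⟩
      simp only [revtrans_apply, Fin.rev_rev]
      exact ⟨Fin.rev_lt_rev.mpr hp'.1, hp'.2⟩
    · intro p _; simp [Fin.rev_rev]
    · intro p _; simp [Fin.rev_rev]
  have hU : ((Finset.univ : Finset (Fin m × Fin m)).filter fun p =>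
        p.1 < p.2 ∧ π p.1 < π p.2) ∪
      ((Finset.univ : Finset (Fin m × Fin m)).filter fun p =>
        p.1 < p.2 ∧ π p.2 < π p.1) =
      ((Finset.univ : Finset (Fin m × Fin m)).filter fun p => p.1 < p.2) := by
    ext p
    simp only [Finset.mem_union, Finset.mem_filter, Finset.mem_univ, true_and]
    constructor
    · rintro (⟨h, _⟩ | ⟨h, _⟩) <;> exact h
    · intro h
      have hne : π p.1 ≠ π p.2 := fun e => (ne_of_lt h) (π.injective e)
      rcases lt_or_gt_of_ne hne with h' | h'
      · exact Or.inl ⟨h, h'⟩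
      · exact Or.inr ⟨h, h'⟩
  have hD : Disjoint
      ((Finset.univ : Finset (Fin m × Fin m)).filter fun p =>
        p.1 < p.2 ∧ π p.1 < π p.2)
      ((Finset.univ : Finset (Fin m × Fin m)).filter fun p =>
        p.1 < p.2 ∧ π p.2 < π p.1) := by
    rw [Finset.disjoint_left]
    intro p hp hp'
    simp only [Finset.mem_filter, Finset.mem_univ, true_and] at hp hp'
    exact absurd hp'.2 (not_lt.mpr (le_of_lt hp.2))
  have hB : inversions π =
      ((Finset.univ : Finset (Fin m × Fin m)).filter fun p =>
        p.1 < p.2 ∧ π p.2 < π p.1).card := rfl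
  have := Finset.card_union_of_disjoint hD
  rw [hU, card_lt_pairs] at this
  rw [hA, hB]
  omega

lemma inversions_le {m : ℕ} (π : Equiv.Perm (Fin m)) : inversions π ≤ m.choose 2 := by
  have := inversions_revtrans π
  omega

lemma negStat_revtrans (n : ℕ) (π : Equiv.Perm (Fin (2 * n))) :
    negStat n (Fin.revPerm.trans π) + negStat n π = n := by
  have hA : negStat n (Fin.revPerm.trans π) =
      (Finset.univ.filter fun j : Fin (2 * n) => (j : ℕ) < n ∧ (π j : ℕ) < n).card := by
    unfold negStat
    refine Finset.card_bij' (fun i _ => i.rev) (fun i _ => i.rev) ?_ ?_ ?_ ?_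
    · intro i hi
      have hi' := (Finset.mem_filter.mp hi).2
      refine Finset.mem_filter.mpr ⟨Finset.mem_univ _, ?_⟩
      have hi1 := hi'.1
      have h1 := i.is_lt
      have h2 : (i.rev : ℕ) = 2 * n - (i + 1) := Fin.val_rev i
      exact ⟨by omega, hi'.2⟩
    · intro j hj
      have hj' := (Finset.mem_filter.mp hj).2
      refine Finset.mem_filter.mpr ⟨Finset.mem_univ _, ?_⟩
      simp only [revtrans_apply, Fin.rev_rev]
      have hj1 := hj'.1
      have h1 := j.is_lt
      have h2 : (j.rev : ℕ) = 2 * n - (j + 1) := Fin.val_rev j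
      exact ⟨by omega, hj'.2⟩
    · intro i _; simp [Fin.rev_rev]
    · intro i _; simp [Fin.rev_rev]
  have hU : (Finset.univ.filter fun j : Fin (2 * n) => (j : ℕ) < n ∧ (π j : ℕ) < n) ∪
      (Finset.univ.filter fun j : Fin (2 * n) => n ≤ (j : ℕ) ∧ (π j : ℕ) < n) =
      Finset.univ.filter fun j : Fin (2 * n) => (π j : ℕ) < n := by
    ext j
    simp only [Finset.mem_union, Finset.mem_filter, Finset.mem_univ, true_and]
    constructor
    · rintro (⟨_, h⟩ | ⟨_, h⟩) <;> exact h
    · intro h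
      rcases lt_or_ge (j : ℕ) n with h' | h'
      · exact Or.inl ⟨h', h⟩
      · exact Or.inr ⟨h', h⟩
  have hD : Disjoint
      (Finset.univ.filter fun j : Fin (2 * n) => (j : ℕ) < n ∧ (π j : ℕ) < n)
      (Finset.univ.filter fun j : Fin (2 * n) => n ≤ (j : ℕ) ∧ (π j : ℕ) < n) := by
    rw [Finset.disjoint_left]
    intro j hj hj'
    simp only [Finset.mem_filter, Finset.mem_univ, true_and] at hj hj'
    omega
  have hN : (Finset.univ.filter fun j : Fin (2 * n) => (π j : ℕ) < n).card = n := by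
    rw [show (Finset.univ.filter fun j : Fin (2 * n) => (π j : ℕ) < n).card =
        (Finset.univ.filter fun k : Fin (2 * n) => (k : ℕ) < n).card from
      Finset.card_bij' (i := fun j _ => π j) (j := fun k _ => π.symm k)
        (by intro j hj; simp only [Finset.mem_filter, Finset.mem_univ, true_and] at hj ⊢; exact hj)
        (by intro k hk; simp only [Finset.mem_filter, Finset.mem_univ, true_and,
              Equiv.apply_symm_apply] at hk ⊢; exact hk)
        (by intro j _; simp) (by intro k _; simp)]
    rcases Nat.eq_zero_or_pos n with rfl | hn
    · simp
    · have he : (Finset.univ.filter fun k : Fin (2 * n) => (k : ℕ) < n) =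
          Finset.Iio (⟨n, by omega⟩ : Fin (2 * n)) := by
        ext k
        simp [Finset.mem_Iio, Fin.lt_def]
      rw [he, Fin.card_Iio]
  have hB : negStat n π =
      (Finset.univ.filter fun j : Fin (2 * n) => n ≤ (j : ℕ) ∧ (π j : ℕ) < n).card := rfl
  have := Finset.card_union_of_disjoint hD
  rw [hU, hN] at this
  rw [hA, hB]
  omega

lemma negStat_le (n : ℕ) (π : Equiv.Perm (Fin (2 * n))) : negStat n π ≤ n := by
  have h := negStat_revtrans n (Fin.revPerm.trans π)
  rw [revtrans_revtrans] at h
  omega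

lemma covers_flipud_iff (n : ℕ) (A : Board) (hA : A ⊆ grid (2 * n) (2 * n))
    (π : Equiv.Perm (Fin (2 * n))) :
    Covers (flipud (2 * n) A) π ↔ Covers A (Fin.revPerm.trans π) := by
  constructor
  · intro h i
    have hi := h i.rev
    simp only [flipud, Finset.mem_image] at hi
    obtain ⟨c, hc, heq⟩ := hi
    have hcg := hA hc
    simp only [grid, Finset.mem_product, Finset.mem_range] at hcg
    have h2 : (i.rev : ℕ) = 2 * n - (i + 1) := Fin.val_rev i
    have hilt := i.is_lt
    have h3 : 2 * n - 1 - c.1 = (i.rev : ℕ) := congrArg Prod.fst heq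
    have h4 : c.2 = ((π i.rev : Fin (2 * n)) : ℕ) := congrArg Prod.snd heq
    have hc1 : c.1 = (i : ℕ) := by omega
    rw [revtrans_apply]
    have : c = ((i : ℕ), ((π i.rev : Fin (2 * n)) : ℕ)) := Prod.ext hc1 h4
    rwa [this] at hc
  · intro h i
    have hi := h i.rev
    rw [revtrans_apply, Fin.rev_rev] at hi
    simp only [flipud, Finset.mem_image]
    refine ⟨((i.rev : ℕ), ((π i : Fin (2 * n)) : ℕ)), hi, ?_⟩
    have h2 : (i.rev : ℕ) = 2 * n - (i + 1) := Fin.val_rev i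
    have hilt := i.is_lt
    exact Prod.ext (by omega) rfl

lemma rot180_revtrans_iff {m : ℕ} (π : Equiv.Perm (Fin m)) :
    rot180Perm (Fin.revPerm.trans π) = Fin.revPerm.trans π ↔ rot180Perm π = π := by
  have key : ∀ σ : Equiv.Perm (Fin m), rot180Perm σ = σ ↔ ∀ i, (σ i.rev).rev = σ.trans (Equiv.refl _) i := by
    intro σ; rw [Equiv.ext_iff]; rfl
  simp only [Equiv.ext_iff]
  constructor
  · intro h i
    have := h i.rev
    simp only [rot180Perm, Equiv.trans_apply, Fin.revPerm_apply, Fin.rev_rev] at this ⊢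
    exact this
  · intro h i
    have := h i.rev
    simp only [rot180Perm, Equiv.trans_apply, Fin.revPerm_apply, Fin.rev_rev] at this ⊢
    exact this

lemma qvar_ne_zero : qvar ≠ 0 := by
  intro h
  rw [qvar, IsFractionRing.to_map_eq_zero_iff] at h
  exact MvPolynomial.X_ne_zero 0 h

lemma tvar_ne_zero : tvar ≠ 0 := by
  intro h
  rw [tvar, IsFractionRing.to_map_eq_zero_iff] at h
  exact MvPolynomial.X_ne_zero 1 h

lemma pow_eq_mul_inv_pow {F : Type*} [Field F] (q : F) (hq : q ≠ 0) {a b c : ℕ}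
    (h : a + b = c) : q ^ a = q ^ c * q⁻¹ ^ b := by
  subst h
  rw [pow_add, inv_pow, mul_assoc, mul_inv_cancel₀ (pow_ne_zero _ hq), mul_one]

end Aux

/-- For a `2n × 2n` board `A`,
`RB^{A^↕}(q,t) = q^{C(2n,2)} t^n RB^A(q⁻¹, t⁻¹)`. -/
theorem RB_flipud (n : ℕ) (A : Board) (hA : A ⊆ grid (2 * n) (2 * n)) :
    RB qvar tvar n (flipud (2 * n) A) =
      qvar ^ ((2 * n).choose 2) * tvar ^ n * RB qvar⁻¹ tvar⁻¹ n A := by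
  unfold RB
  rw [Finset.mul_sum]
  refine Finset.sum_bij' (fun π _ => Fin.revPerm.trans π) (fun π _ => Fin.revPerm.trans π) ?_ ?_ ?_ ?_ ?_
  · intro π hπ
    simp only [Finset.mem_filter, Finset.mem_univ, true_and] at hπ ⊢
    exact ⟨(rot180_revtrans_iff π).mpr hπ.1, (covers_flipud_iff n A hA π).mp hπ.2⟩
  · intro π hπ
    simp only [Finset.mem_filter, Finset.mem_univ, true_and] at hπ ⊢
    refine ⟨?_, ?_⟩
    · rw [← rot180_revtrans_iff, revtrans_revtrans]; exact hπ.1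
    · rw [covers_flipud_iff n A hA, revtrans_revtrans]; exact hπ.2
  · intro π _; exact revtrans_revtrans π
  · intro π _; exact revtrans_revtrans π
  · intro π hπ
    have h1 : inversions π = (2 * n).choose 2 - inversions (Fin.revPerm.trans π) := by
      have := inversions_revtrans π; omega
    have h2 : negStat n π = n - negStat n (Fin.revPerm.trans π) := by
      have := negStat_revtrans n π; omega
    have hq : qvar ^ inversions π =
        qvar ^ ((2 * n).choose 2) * qvar⁻¹ ^ inversions (Fin.revPerm.trans π) := by
      apply pow_eq_mul_inv_pow qvar qvar_ne_zero
      have := inversions_revtrans π; omega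
    have ht : tvar ^ negStat n π = tvar ^ n * tvar⁻¹ ^ negStat n (Fin.revPerm.trans π) := by
      apply pow_eq_mul_inv_pow tvar tvar_ne_zero
      have := negStat_revtrans n π; omega
    rw [hq, ht]
    ring
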